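/- arXiv:2508.12607 — 4 statements merged into one kernel-verified Lean document; each statement's English description precedes it below -/
import Mathlib

section
/- Let K be a field, G a finite simple graph on [n] and v an internal vertex of G. Then the binomial edge ideal of G decomposes as J_G = J_{G_v} ∩ ((x_v, y_v) + J_{G∖v}), an equality of ideals of S = K[x_1,…,x_n,y_1,…,y_n]. -/
/-- A maximal clique of a simple graph: a clique that is maximal under inclusion. -/
def MaxClq {V : Type*} (G : SimpleGraph V) (s : Set V) : Prop :=
  G.IsClique s ∧ ∀ t : Set V, G.IsClique t → s ⊆ t → s = t

/-- An internal vertex: a vertex lying in at least two (distinct) maximal cliques. -/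
def InternalVtx {V : Type*} (G : SimpleGraph V) (v : V) : Prop :=
  ∃ s t : Set V, MaxClq G s ∧ MaxClq G t ∧ s ≠ t ∧ v ∈ s ∧ v ∈ t

/-- `iv G`: the number of internal vertices of `G`. -/
noncomputable def ivNum {V : Type*} (G : SimpleGraph V) : ℕ :=
  {v : V | InternalVtx G v}.ncard

/-- `c G`: the number of connected components of `G`. -/
noncomputable def compNum {V : Type*} (G : SimpleGraph V) : ℕ :=
  Nat.card G.ConnectedComponent

/-- `𝒞 G`: the number of maximal cliques of `G`. -/
noncomputable def maxClqNum {V : Type*} (G : SimpleGraph V) : ℕ :=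
  {s : Set V | MaxClq G s}.ncard

/-- `ω G`: the clique number of `G`, the maximum size of a clique. -/
noncomputable def clqNum {V : Type*} (G : SimpleGraph V) : ℕ :=
  sSup {k : ℕ | ∃ s : Set V, G.IsClique s ∧ s.ncard = k}

/-- A set of edges of `G` is clique-disjoint if no two distinct edges of it are both
contained in a single clique of `G`. -/
def CliqueDisjointEdges {V : Type*} (G : SimpleGraph V) (E : Set (Sym2 V)) : Prop :=
  E ⊆ G.edgeSet ∧ ∀ e ∈ E, ∀ f ∈ E, e ≠ f →
    ¬ ∃ s : Set V, G.IsClique s ∧ (∀ x ∈ e, x ∈ s) ∧ (∀ x ∈ f, x ∈ s)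

/-- `η G`: the maximum cardinality of a clique-disjoint set of edges of `G`. -/
noncomputable def etaNum {V : Type*} (G : SimpleGraph V) : ℕ :=
  sSup {k : ℕ | ∃ E : Set (Sym2 V), CliqueDisjointEdges G E ∧ E.ncard = k}

/-- `G_v`: the graph on the same vertex set as `G` whose edges are those of `G` together
with all edges between distinct neighbours of `v`. -/
def addNbrEdges {V : Type*} (G : SimpleGraph V) (v : V) : SimpleGraph V where
  Adj a b := G.Adj a b ∨ (a ≠ b ∧ G.Adj v a ∧ G.Adj v b)
  symm := by
    constructor
    intro a b h
    rcases h with h | ⟨hne, h1, h2⟩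
    · exact Or.inl h.symm
    · exact Or.inr ⟨hne.symm, h2, h1⟩
  loopless := by
    constructor
    intro a h
    rcases h with h | ⟨hne, _, _⟩
    · exact G.loopless.irrefl a h
    · exact hne rfl

/-- The graph `G ∖ v`: the vertex `v` is isolated and the remaining edges are exactly
those of the induced subgraph of `G` on the complement of `v`, so that the binomial
edge ideal generators of `G ∖ v` are exactly those coming from edges of `G` avoiding `v`. -/
def delVtx {V : Type*} (G : SimpleGraph V) (v : V) : SimpleGraph V where
  Adj a b := G.Adj a b ∧ a ≠ v ∧ b ≠ v
  symm := by
    constructor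
    rintro a b ⟨h, ha, hb⟩
    exact ⟨h.symm, hb, ha⟩
  loopless := by
    constructor
    rintro a ⟨h, _, _⟩
    exact G.loopless.irrefl a h

open MvPolynomial in
/-- The binomial edge ideal of a graph `G` on `[n]`, inside
`S = K[x_1, …, x_n, y_1, …, y_n]`, where `x_i = X (Sum.inl i)` and `y_i = X (Sum.inr i)`. -/
noncomputable def binomialEdgeIdeal (K : Type*) [Field K] (n : ℕ) (G : SimpleGraph (Fin n)) :
    Ideal (MvPolynomial (Fin n ⊕ Fin n) K) :=
  Ideal.span {f | ∃ i j : Fin n, G.Adj i j ∧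
    f = X (Sum.inl i) * X (Sum.inr j) - X (Sum.inl j) * X (Sum.inr i)}

namespace OhtaniAux

open MvPolynomial

variable {K : Type*} [Field K] {n : ℕ}

/-- The evaluation map sending `x_v, y_v` to `0` and fixing all other variables. -/
noncomputable def phiv (K : Type*) [Field K] (n : ℕ) (v : Fin n) :
    MvPolynomial (Fin n ⊕ Fin n) K →ₐ[K] MvPolynomial (Fin n ⊕ Fin n) K :=
  aeval (fun u => if u = Sum.inl v ∨ u = Sum.inr v then
    (0 : MvPolynomial (Fin n ⊕ Fin n) K) else X u)

lemma phiv_XL (v : Fin n) : phiv K n v (X (Sum.inl v)) = 0 := by simp [phiv]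

lemma phiv_XR (v : Fin n) : phiv K n v (X (Sum.inr v)) = 0 := by simp [phiv]

lemma sub_phiv_mem_span (v : Fin n) (f : MvPolynomial (Fin n ⊕ Fin n) K) :
    f - phiv K n v f ∈ Ideal.span {X (Sum.inl v), X (Sum.inr v)} := by
  induction f using MvPolynomial.induction_on with
  | C a => simp [phiv]
  | add f g hf hg =>
      have h : f + g - phiv K n v (f + g)
          = (f - phiv K n v f) + (g - phiv K n v g) := by
        rw [map_add]; ring
      rw [h]; exact Ideal.add_mem _ hf hg
  | mul_X f u hf =>
      rw [map_mul]
      by_cases h : u = Sum.inl v ∨ u = Sum.inr v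
      · have hXu : phiv K n v (X u) = 0 := by simp [phiv, h]
        rw [hXu, mul_zero, sub_zero]
        have hmem : (X u : MvPolynomial (Fin n ⊕ Fin n) K)
            ∈ ({X (Sum.inl v), X (Sum.inr v)} : Set _) := by
          rcases h with h | h <;> simp [h]
        exact Ideal.mul_mem_left _ _ (Ideal.subset_span hmem)
      · have hXu : phiv K n v (X u) = X u := by simp [phiv, h]
        rw [hXu]
        have h2 : f * X u - phiv K n v f * X u = (f - phiv K n v f) * X u := by ring
        rw [h2]
        exact Ideal.mul_mem_right _ _ hf

lemma del_le (G : SimpleGraph (Fin n)) (v : Fin n) :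
    binomialEdgeIdeal K n (delVtx G v) ≤ binomialEdgeIdeal K n G := by
  apply Ideal.span_mono
  rintro f ⟨i, j, ⟨hadj, _, _⟩, rfl⟩
  exact ⟨i, j, hadj, rfl⟩

lemma le_add (G : SimpleGraph (Fin n)) (v : Fin n) :
    binomialEdgeIdeal K n G ≤ binomialEdgeIdeal K n (addNbrEdges G v) := by
  apply Ideal.span_mono
  rintro f ⟨i, j, hadj, rfl⟩
  exact ⟨i, j, Or.inl hadj, rfl⟩

lemma mulX_mem (G : SimpleGraph (Fin n)) (v : Fin n)
    {g : MvPolynomial (Fin n ⊕ Fin n) K}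
    (hg : g ∈ binomialEdgeIdeal K n (addNbrEdges G v)) :
    X (Sum.inl v) * g ∈ binomialEdgeIdeal K n G ∧
      X (Sum.inr v) * g ∈ binomialEdgeIdeal K n G := by
  refine Submodule.span_induction ?_ ?_ ?_ ?_ hg
  · rintro f ⟨i, j, hadj, rfl⟩
    rcases hadj with hij | ⟨hne, hvi, hvj⟩
    · have hf : (X (Sum.inl i) * X (Sum.inr j) - X (Sum.inl j) * X (Sum.inr i) :
          MvPolynomial (Fin n ⊕ Fin n) K) ∈ binomialEdgeIdeal K n G :=
        Ideal.subset_span ⟨i, j, hij, rfl⟩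
      exact ⟨Ideal.mul_mem_left _ _ hf, Ideal.mul_mem_left _ _ hf⟩
    · have h1 : (X (Sum.inl v) * X (Sum.inr i) - X (Sum.inl i) * X (Sum.inr v) :
          MvPolynomial (Fin n ⊕ Fin n) K) ∈ binomialEdgeIdeal K n G :=
        Ideal.subset_span ⟨v, i, hvi, rfl⟩
      have h2 : (X (Sum.inl v) * X (Sum.inr j) - X (Sum.inl j) * X (Sum.inr v) :
          MvPolynomial (Fin n ⊕ Fin n) K) ∈ binomialEdgeIdeal K n G :=
        Ideal.subset_span ⟨v, j, hvj, rfl⟩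
      constructor
      · have hx : (X (Sum.inl v) : MvPolynomial (Fin n ⊕ Fin n) K) *
            (X (Sum.inl i) * X (Sum.inr j) - X (Sum.inl j) * X (Sum.inr i)) =
            X (Sum.inl i) *
              (X (Sum.inl v) * X (Sum.inr j) - X (Sum.inl j) * X (Sum.inr v)) -
            X (Sum.inl j) *
              (X (Sum.inl v) * X (Sum.inr i) - X (Sum.inl i) * X (Sum.inr v)) := by
          ring
        rw [hx]
        exact Ideal.sub_mem _ (Ideal.mul_mem_left _ _ h2) (Ideal.mul_mem_left _ _ h1)
      · have hy : (X (Sum.inr v) : MvPolynomial (Fin n ⊕ Fin n) K) *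
            (X (Sum.inl i) * X (Sum.inr j) - X (Sum.inl j) * X (Sum.inr i)) =
            X (Sum.inr i) *
              (X (Sum.inl v) * X (Sum.inr j) - X (Sum.inl j) * X (Sum.inr v)) -
            X (Sum.inr j) *
              (X (Sum.inl v) * X (Sum.inr i) - X (Sum.inl i) * X (Sum.inr v)) := by
          ring
        rw [hy]
        exact Ideal.sub_mem _ (Ideal.mul_mem_left _ _ h2) (Ideal.mul_mem_left _ _ h1)
  · constructor <;> (rw [mul_zero]; exact Ideal.zero_mem _)
  · rintro x y _ _ ⟨hx1, hx2⟩ ⟨hy1, hy2⟩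
    constructor <;> (rw [mul_add]; exact Ideal.add_mem _ (by assumption) (by assumption))
  · rintro a x _ ⟨hx1, hx2⟩
    rw [smul_eq_mul]
    constructor
    · have h : X (Sum.inl v) * (a * x) = a * (X (Sum.inl v) * x) := by ring
      rw [h]; exact Ideal.mul_mem_left _ _ hx1
    · have h : X (Sum.inr v) * (a * x) = a * (X (Sum.inr v) * x) := by ring
      rw [h]; exact Ideal.mul_mem_left _ _ hx2

lemma span_mul_mem (G : SimpleGraph (Fin n)) (v : Fin n)
    {p g : MvPolynomial (Fin n ⊕ Fin n) K}
    (hp : p ∈ Ideal.span {X (Sum.inl v), X (Sum.inr v)})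
    (hg : g ∈ binomialEdgeIdeal K n (addNbrEdges G v)) :
    p * g ∈ binomialEdgeIdeal K n G := by
  refine Submodule.span_induction ?_ ?_ ?_ ?_ hp
  · intro x hx
    rcases hx with rfl | hx
    · exact (mulX_mem G v hg).1
    · rw [Set.mem_singleton_iff] at hx
      subst hx
      exact (mulX_mem G v hg).2
  · rw [zero_mul]; exact Ideal.zero_mem _
  · intro x y _ _ hx hy
    rw [add_mul]; exact Ideal.add_mem _ hx hy
  · intro a x _ hx
    rw [smul_eq_mul, mul_assoc]
    exact Ideal.mul_mem_left _ _ hx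

lemma sub_phiv_mem_JG (G : SimpleGraph (Fin n)) (v : Fin n)
    {g : MvPolynomial (Fin n ⊕ Fin n) K}
    (hg : g ∈ binomialEdgeIdeal K n (addNbrEdges G v)) :
    g - phiv K n v g ∈ binomialEdgeIdeal K n G := by
  refine Submodule.span_induction ?_ ?_ ?_ ?_ hg
  · rintro f ⟨i, j, hadj, rfl⟩
    by_cases hi : i = v
    · subst hi
      have hGij : G.Adj i j := by
        rcases hadj with h | ⟨_, h1, _⟩
        · exact h
        · exact absurd h1 (G.irrefl)
      have hphi : phiv K n i
          (X (Sum.inl i) * X (Sum.inr j) - X (Sum.inl j) * X (Sum.inr i)) = 0 := by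
        rw [map_sub, map_mul, map_mul, phiv_XL, phiv_XR, zero_mul, mul_zero, sub_zero]
      rw [hphi, sub_zero]
      exact Ideal.subset_span ⟨i, j, hGij, rfl⟩
    · by_cases hj : j = v
      · subst hj
        have hGij : G.Adj i j := by
          rcases hadj with h | ⟨_, _, h2⟩
          · exact h
          · exact absurd h2 (G.irrefl)
        have hphi : phiv K n j
            (X (Sum.inl i) * X (Sum.inr j) - X (Sum.inl j) * X (Sum.inr i)) = 0 := by
          rw [map_sub, map_mul, map_mul, phiv_XL, phiv_XR, zero_mul, mul_zero, sub_zero]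
        rw [hphi, sub_zero]
        exact Ideal.subset_span ⟨i, j, hGij, rfl⟩
      · have hXi : phiv K n v (X (Sum.inl i)) = X (Sum.inl i) := by simp [phiv, hi]
        have hXj : phiv K n v (X (Sum.inl j)) = X (Sum.inl j) := by simp [phiv, hj]
        have hYi : phiv K n v (X (Sum.inr i)) = X (Sum.inr i) := by simp [phiv, hi]
        have hYj : phiv K n v (X (Sum.inr j)) = X (Sum.inr j) := by simp [phiv, hj]
        rw [map_sub, map_mul, map_mul, hXi, hXj, hYi, hYj, sub_self]
        exact Ideal.zero_mem _
  · rw [map_zero, sub_zero]; exact Ideal.zero_mem _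
  · intro x y _ _ hx hy
    have h : x + y - phiv K n v (x + y)
        = (x - phiv K n v x) + (y - phiv K n v y) := by rw [map_add]; ring
    rw [h]; exact Ideal.add_mem _ hx hy
  · intro a x hxmem hx
    rw [smul_eq_mul]
    have h : a * x - phiv K n v (a * x)
        = a * (x - phiv K n v x) + ((a - phiv K n v a) * x
            - (a - phiv K n v a) * (x - phiv K n v x)) := by
      rw [map_mul]; ring
    rw [h]
    refine Ideal.add_mem _ (Ideal.mul_mem_left _ _ hx) (Ideal.sub_mem _ ?_ ?_)
    · exact span_mul_mem G v (sub_phiv_mem_span v a) hxmem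
    · exact Ideal.mul_mem_left _ _ hx

lemma inter_le (G : SimpleGraph (Fin n)) (v : Fin n)
    {f : MvPolynomial (Fin n ⊕ Fin n) K}
    (h1 : f ∈ binomialEdgeIdeal K n (addNbrEdges G v))
    (h2 : f ∈ Ideal.span {X (Sum.inl v), X (Sum.inr v)}) :
    f ∈ binomialEdgeIdeal K n G := by
  have hker : phiv K n v f = 0 := by
    refine Submodule.span_induction ?_ ?_ ?_ ?_ h2
    · intro x hx
      rcases hx with rfl | hx
      · exact phiv_XL v
      · rw [Set.mem_singleton_iff] at hx; subst hx; exact phiv_XR v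
    · exact map_zero _
    · intro x y _ _ hx hy; rw [map_add, hx, hy, add_zero]
    · intro a x _ hx; rw [smul_eq_mul, map_mul, hx, mul_zero]
  have := sub_phiv_mem_JG G v h1
  rwa [hker, sub_zero] at this

end OhtaniAux

open MvPolynomial in
/-- if `v` is an internal vertex of `G`, then
`J_G = J_{G_v} ∩ ((x_v, y_v) + J_{G ∖ v})` as ideals of `S = K[x_1,…,x_n,y_1,…,y_n]`. -/
theorem stmt0 (K : Type*) [Field K] (n : ℕ) (G : SimpleGraph (Fin n)) (v : Fin n)
    (hv : InternalVtx G v) :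
    binomialEdgeIdeal K n G =
      binomialEdgeIdeal K n (addNbrEdges G v) ⊓
        (Ideal.span {X (Sum.inl v), X (Sum.inr v)} +
          binomialEdgeIdeal K n (delVtx G v)) := by
  apply le_antisymm
  · refine le_inf (OhtaniAux.le_add G v) ?_
    rw [binomialEdgeIdeal, Ideal.span_le]
    rintro f ⟨i, j, hadj, rfl⟩
    by_cases hi : i = v
    · subst hi
      apply Ideal.mem_sup_left
      rw [Ideal.mem_span_pair]
      exact ⟨X (Sum.inr j), -X (Sum.inl j), by ring⟩
    · by_cases hj : j = v
      · subst hj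
        apply Ideal.mem_sup_left
        rw [Ideal.mem_span_pair]
        exact ⟨-X (Sum.inr i), X (Sum.inl i), by ring⟩
      · exact Ideal.mem_sup_right (Ideal.subset_span ⟨i, j, ⟨hadj, hi, hj⟩, rfl⟩)
  · intro f hf
    obtain ⟨h1, h2⟩ := Submodule.mem_inf.mp hf
    rw [Ideal.add_eq_sup] at h2
    obtain ⟨p, hp, q, hq, rfl⟩ := Submodule.mem_sup.mp h2
    have hqG : q ∈ binomialEdgeIdeal K n G := OhtaniAux.del_le G v hq
    have hpGv : p ∈ binomialEdgeIdeal K n (addNbrEdges G v) := by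
      have h := Ideal.sub_mem _ h1 (OhtaniAux.le_add G v hqG)
      simpa using h
    exact Ideal.add_mem _ (OhtaniAux.inter_le G v hpGv hp) hqG
end

section
/- Let K be a field, m ≥ 2 an integer, G a finite simple graph on [n] and v an internal vertex of G. Then the generalized binomial edge ideal decomposes as J_{K_m,G} = J_{K_m,G_v} ∩ (P_v + J_{K_m,G∖v}), an equality of ideals of S = K[x_{ij} : i ∈ [m], j ∈ [n]]. -/
open MvPolynomial in
/-- The generalized binomial edge ideal `J_{K_m, G}` of a graph `G` on `[n]`, inside
`S = K[x_{ij} : i ∈ [m], j ∈ [n]]`: it is generated by the `2`-minors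
`x_{ik} x_{jl} − x_{il} x_{jk}` for `1 ≤ i < j ≤ m` and `{k, l} ∈ E(G)`. -/
noncomputable def genBEI (K : Type*) [Field K] (m n : ℕ) (G : SimpleGraph (Fin n)) :
    Ideal (MvPolynomial (Fin m × Fin n) K) :=
  Ideal.span {f | ∃ (i j : Fin m) (k l : Fin n), i < j ∧ G.Adj k l ∧
    f = X (i, k) * X (j, l) - X (i, l) * X (j, k)}

open MvPolynomial in
/-- `P_v = (x_{1v}, …, x_{mv})`. -/
noncomputable def Pvert (K : Type*) [Field K] (m n : ℕ) (v : Fin n) :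
    Ideal (MvPolynomial (Fin m × Fin n) K) :=
  Ideal.span (Set.range fun i : Fin m => X (i, v))

open MvPolynomial in
/-- Any `2`-minor on an edge, with arbitrary (not necessarily ordered) row indices,
belongs to the generalized binomial edge ideal. -/
lemma genMem (K : Type*) [Field K] (m n : ℕ) (G : SimpleGraph (Fin n))
    {c d : Fin n} (h : G.Adj c d) (a b : Fin m) :
    X (a, c) * X (b, d) - X (a, d) * X (b, c) ∈ genBEI K m n G := by
  rcases lt_trichotomy a b with hab | hab | hab
  · exact Ideal.subset_span ⟨a, b, c, d, hab, h, rfl⟩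
  · subst hab
    have : (X (a, c) * X (a, d) - X (a, d) * X (a, c) :
        MvPolynomial (Fin m × Fin n) K) = 0 := by ring
    rw [this]; exact zero_mem _
  · have : (X (a, c) * X (b, d) - X (a, d) * X (b, c) :
        MvPolynomial (Fin m × Fin n) K)
        = X (b, d) * X (a, c) - X (b, c) * X (a, d) := by ring
    rw [this]; exact Ideal.subset_span ⟨b, a, d, c, hab, h.symm, rfl⟩

open MvPolynomial in
/-- Key identity: if `u, w` are neighbours of `v`, then `x_{kv}` times the minor on
columns `u, w` (rows `i, j`) lies in `J_{K_m,G}`. -/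
lemma keyId (K : Type*) [Field K] (m n : ℕ) (G : SimpleGraph (Fin n))
    {v u w : Fin n} (hvu : G.Adj v u) (hvw : G.Adj v w) (k i j : Fin m) :
    X (k, v) * (X (i, u) * X (j, w) - X (i, w) * X (j, u)) ∈ genBEI K m n G := by
  have h1 := genMem K m n G hvw i j
  have h2 := genMem K m n G hvu.symm i k
  have h3 := genMem K m n G hvu.symm j k
  have hid : (X (k, v) * (X (i, u) * X (j, w) - X (i, w) * X (j, u)) :
      MvPolynomial (Fin m × Fin n) K)
      = X (k, u) * (X (i, v) * X (j, w) - X (i, w) * X (j, v))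
        + X (j, w) * (X (i, u) * X (k, v) - X (i, v) * X (k, u))
        - X (i, w) * (X (j, u) * X (k, v) - X (j, v) * X (k, u)) := by ring
  rw [hid]
  exact sub_mem (add_mem (Ideal.mul_mem_left _ _ h1) (Ideal.mul_mem_left _ _ h2))
    (Ideal.mul_mem_left _ _ h3)

open MvPolynomial in
/-- The substitution killing the variables of column `v`. -/
noncomputable def phiV (K : Type*) [Field K] (m n : ℕ) (v : Fin n) :
    MvPolynomial (Fin m × Fin n) K →ₐ[K] MvPolynomial (Fin m × Fin n) K :=
  aeval (fun p : Fin m × Fin n => if p.2 = v then 0 else X p)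

open MvPolynomial in
lemma phiV_X (K : Type*) [Field K] (m n : ℕ) (v : Fin n) (p : Fin m × Fin n) :
    phiV K m n v (X p) = if p.2 = v then 0 else X p := by
  simp [phiV]

open MvPolynomial in
/-- `p − φ(p)` lies in `P_v`. -/
lemma sub_phiV_mem (K : Type*) [Field K] (m n : ℕ) (v : Fin n)
    (p : MvPolynomial (Fin m × Fin n) K) :
    p - phiV K m n v p ∈ Pvert K m n v := by
  induction p using MvPolynomial.induction_on with
  | C a => simp [phiV]
  | add p q hp hq =>
      have : p + q - phiV K m n v (p + q)
          = (p - phiV K m n v p) + (q - phiV K m n v q) := by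
        rw [map_add]; ring
      rw [this]; exact add_mem hp hq
  | mul_X p s hp =>
      rw [map_mul, phiV_X]
      by_cases hs : s.2 = v
      · rw [if_pos hs, mul_zero, sub_zero]
        have hXs : (X s : MvPolynomial (Fin m × Fin n) K) ∈ Pvert K m n v := by
          obtain ⟨s1, s2⟩ := s
          cases hs
          exact Ideal.subset_span ⟨s1, rfl⟩
        exact Ideal.mul_mem_left _ _ hXs
      · rw [if_neg hs]
        have : p * X s - phiV K m n v p * X s
            = (p - phiV K m n v p) * X s := by ring
        rw [this]; exact Ideal.mul_mem_right _ _ hp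

open MvPolynomial in
/-- Multiplying an element of `P_v` by anything annihilated into `J` by every `x_{kv}`
stays in `J`. -/
lemma pvert_mul_mem (K : Type*) [Field K] (m n : ℕ) (v : Fin n)
    (J : Ideal (MvPolynomial (Fin m × Fin n) K))
    {q g : MvPolynomial (Fin m × Fin n) K}
    (hq : q ∈ Pvert K m n v) (hg : ∀ k : Fin m, X (k, v) * g ∈ J) :
    q * g ∈ J := by
  refine Submodule.span_induction ?_ ?_ ?_ ?_ hq
  · rintro x ⟨k, rfl⟩
    exact hg k
  · simp
  · intro x y _ _ hx hy
    rw [add_mul]; exact add_mem hx hy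
  · intro a x _ hx
    rw [smul_eq_mul, mul_assoc]
    exact Ideal.mul_mem_left _ _ hx

open MvPolynomial in
/-- The main induction: for every `f` in `J_{K_m,G_v}`, both `f − φ(f)` and every
`x_{kv}·φ(f)` lie in `J_{K_m,G}`. -/
lemma main_ind (K : Type*) [Field K] (m n : ℕ) (G : SimpleGraph (Fin n)) (v : Fin n)
    {f : MvPolynomial (Fin m × Fin n) K}
    (hf : f ∈ genBEI K m n (addNbrEdges G v)) :
    f - phiV K m n v f ∈ genBEI K m n G ∧
      ∀ k : Fin m, X (k, v) * phiV K m n v f ∈ genBEI K m n G := by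
  refine Submodule.span_induction ?_ ?_ ?_ ?_ hf
  · rintro g ⟨i, j, k, l, hij, hkl, rfl⟩
    have hkl' : k ≠ l := (addNbrEdges G v).ne_of_adj hkl
    by_cases hk : k = v
    · -- edge touches v in first coordinate; it must be a genuine G-edge
      have hGkl : G.Adj k l := by
        rcases hkl with h | ⟨_, h1, _⟩
        · exact h
        · rw [hk] at h1; exact absurd h1 (G.loopless.irrefl v)
      have hl : l ≠ v := fun h => hkl' (hk.trans h.symm)
      have hphi0 : phiV K m n v (X (i, k) * X (j, l) - X (i, l) * X (j, k)) = 0 := by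
        rw [map_sub, map_mul, map_mul, phiV_X, phiV_X, phiV_X, phiV_X]
        simp [hk, hl]
      refine ⟨?_, ?_⟩
      · rw [hphi0, sub_zero]; exact genMem K m n G hGkl i j
      · intro c; rw [hphi0, mul_zero]; exact zero_mem _
    · by_cases hl : l = v
      · have hGkl : G.Adj k l := by
          rcases hkl with h | ⟨_, _, h2⟩
          · exact h
          · rw [hl] at h2; exact absurd h2 (G.loopless.irrefl v)
        have hphi0 : phiV K m n v (X (i, k) * X (j, l) - X (i, l) * X (j, k)) = 0 := by
          rw [map_sub, map_mul, map_mul, phiV_X, phiV_X, phiV_X, phiV_X]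
          simp [hk, hl]
        refine ⟨?_, ?_⟩
        · rw [hphi0, sub_zero]; exact genMem K m n G hGkl i j
        · intro c; rw [hphi0, mul_zero]; exact zero_mem _
      · -- edge avoids v : φ fixes the generator
        have hphi : phiV K m n v (X (i, k) * X (j, l) - X (i, l) * X (j, k))
            = X (i, k) * X (j, l) - X (i, l) * X (j, k) := by
          rw [map_sub, map_mul, map_mul, phiV_X, phiV_X, phiV_X, phiV_X]
          simp [hk, hl]
        refine ⟨by rw [hphi]; simp, ?_⟩
        intro c
        rw [hphi]
        rcases hkl with h | ⟨_, h1, h2⟩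
        · exact Ideal.mul_mem_left _ _ (genMem K m n G h i j)
        · exact keyId K m n G h1 h2 c i j
  · refine ⟨by simp, ?_⟩
    intro k; rw [map_zero, mul_zero]; exact zero_mem _
  · intro x y _ _ hx hy
    refine ⟨?_, ?_⟩
    · have : x + y - phiV K m n v (x + y)
          = (x - phiV K m n v x) + (y - phiV K m n v y) := by rw [map_add]; ring
      rw [this]; exact add_mem hx.1 hy.1
    · intro k
      rw [map_add, mul_add]
      exact add_mem (hx.2 k) (hy.2 k)
  · intro a x _ hx
    rw [smul_eq_mul]
    refine ⟨?_, ?_⟩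
    · have : a * x - phiV K m n v (a * x)
          = a * (x - phiV K m n v x) + (a - phiV K m n v a) * phiV K m n v x := by
        rw [map_mul]; ring
      rw [this]
      exact add_mem (Ideal.mul_mem_left _ _ hx.1)
        (pvert_mul_mem K m n v _ (sub_phiV_mem K m n v a) hx.2)
    · intro k
      have : X (k, v) * phiV K m n v (a * x)
          = phiV K m n v a * (X (k, v) * phiV K m n v x) := by
        rw [map_mul]; ring
      rw [this]
      exact Ideal.mul_mem_left _ _ (hx.2 k)

/-- if `m ≥ 2` and `v` is an internal vertex of `G`, then
`J_{K_m,G} = J_{K_m,G_v} ∩ (P_v + J_{K_m,G∖v})` as ideals of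
`S = K[x_{ij} : i ∈ [m], j ∈ [n]]`. -/
theorem stmt1 (K : Type*) [Field K] (m n : ℕ) (hm : 2 ≤ m) (G : SimpleGraph (Fin n))
    (v : Fin n) (hv : InternalVtx G v) :
    genBEI K m n G =
      genBEI K m n (addNbrEdges G v) ⊓
        (Pvert K m n v + genBEI K m n (delVtx G v)) := by
  classical
  apply le_antisymm
  · refine le_inf ?_ ?_
    · -- J_G ≤ J_{G_v}
      refine Ideal.span_mono ?_
      rintro g ⟨i, j, k, l, hij, hkl, rfl⟩
      exact ⟨i, j, k, l, hij, Or.inl hkl, rfl⟩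
    · -- J_G ≤ P_v + J_{G∖v}
      rw [Ideal.add_eq_sup]
      refine Ideal.span_le.mpr ?_
      rintro g ⟨i, j, k, l, hij, hkl, rfl⟩
      by_cases hk : k = v
      · refine Ideal.mem_sup_left ?_
        have h1 : (MvPolynomial.X (i, k) : MvPolynomial (Fin m × Fin n) K) ∈ Pvert K m n v :=
          hk ▸ Ideal.subset_span ⟨i, rfl⟩
        have h2 : (MvPolynomial.X (j, k) : MvPolynomial (Fin m × Fin n) K) ∈ Pvert K m n v :=
          hk ▸ Ideal.subset_span ⟨j, rfl⟩
        have : (MvPolynomial.X (i, k) * MvPolynomial.X (j, l) - MvPolynomial.X (i, l) * MvPolynomial.X (j, k) :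
            MvPolynomial (Fin m × Fin n) K)
            = MvPolynomial.X (j, l) * MvPolynomial.X (i, k) - MvPolynomial.X (i, l) * MvPolynomial.X (j, k) := by ring
        rw [this]
        exact sub_mem (Ideal.mul_mem_left _ _ h1) (Ideal.mul_mem_left _ _ h2)
      · by_cases hl : l = v
        · refine Ideal.mem_sup_left ?_
          have h1 : (MvPolynomial.X (j, l) : MvPolynomial (Fin m × Fin n) K) ∈ Pvert K m n v :=
            hl ▸ Ideal.subset_span ⟨j, rfl⟩
          have h2 : (MvPolynomial.X (i, l) : MvPolynomial (Fin m × Fin n) K) ∈ Pvert K m n v :=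
            hl ▸ Ideal.subset_span ⟨i, rfl⟩
          have : (MvPolynomial.X (i, k) * MvPolynomial.X (j, l) - MvPolynomial.X (i, l) * MvPolynomial.X (j, k) :
              MvPolynomial (Fin m × Fin n) K)
              = MvPolynomial.X (i, k) * MvPolynomial.X (j, l) - MvPolynomial.X (j, k) * MvPolynomial.X (i, l) := by ring
          rw [this]
          exact sub_mem (Ideal.mul_mem_left _ _ h1) (Ideal.mul_mem_left _ _ h2)
        · exact Ideal.mem_sup_right
            (Ideal.subset_span ⟨i, j, k, l, hij, ⟨hkl, hk, hl⟩, rfl⟩)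
  · -- hard inclusion
    rintro f ⟨hfv, hfQ⟩
    have hphi : phiV K m n v f ∈ genBEI K m n G := by
      have hQle : Pvert K m n v + genBEI K m n (delVtx G v)
          ≤ Ideal.comap (phiV K m n v).toRingHom (genBEI K m n G) := by
        rw [Ideal.add_eq_sup]
        refine sup_le ?_ ?_
        · refine Ideal.span_le.mpr ?_
          rintro g ⟨i, rfl⟩
          rw [SetLike.mem_coe, Ideal.mem_comap]
          have : (phiV K m n v).toRingHom (MvPolynomial.X (i, v)) = 0 := by
            simpa using phiV_X K m n v (i, v)
          rw [this]; exact zero_mem _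
        · refine Ideal.span_le.mpr ?_
          rintro g ⟨i, j, k, l, hij, ⟨hkl, hk, hl⟩, rfl⟩
          rw [SetLike.mem_coe, Ideal.mem_comap]
          have : (phiV K m n v).toRingHom (MvPolynomial.X (i, k) * MvPolynomial.X (j, l) - MvPolynomial.X (i, l) * MvPolynomial.X (j, k))
              = MvPolynomial.X (i, k) * MvPolynomial.X (j, l) - MvPolynomial.X (i, l) * MvPolynomial.X (j, k) := by
            show phiV K m n v _ = _
            rw [map_sub, map_mul, map_mul, phiV_X, phiV_X, phiV_X, phiV_X]
            simp [hk, hl]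
          rw [this]
          exact genMem K m n G hkl i j
      exact Ideal.mem_comap.mp (hQle hfQ)
    have hdiff := (main_ind K m n G v hfv).1
    have : f = (f - phiV K m n v f) + phiV K m n v f := by ring
    rw [this]
    exact add_mem hdiff hphi
end

section
/- Let K be a field, m ≥ 2 an integer, G a finite simple graph on [n] and v any vertex of G. Then J_{K_m,G_v} + (P_v + J_{K_m,G∖v}) = P_v + J_{K_m,G_v∖v} as ideals of S = K[x_{ij} : i ∈ [m], j ∈ [n]]. -/
/-- for `m ≥ 2` and any vertex `v` of `G`,
`J_{K_m,G_v} + (P_v + J_{K_m,G∖v}) = P_v + J_{K_m,G_v∖v}` as ideals of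
`S = K[x_{ij} : i ∈ [m], j ∈ [n]]`. -/
theorem stmt3 (K : Type*) [Field K] (m n : ℕ) (hm : 2 ≤ m) (G : SimpleGraph (Fin n))
    (v : Fin n) :
    genBEI K m n (addNbrEdges G v) + (Pvert K m n v + genBEI K m n (delVtx G v)) =
      Pvert K m n v + genBEI K m n (delVtx (addNbrEdges G v) v) := by
  apply le_antisymm
  · apply sup_le
    · rw [genBEI, Ideal.span_le]
      rintro f ⟨i, j, k, l, hij, hadj, rfl⟩
      by_cases hk : k = v
      · subst hk
        exact Ideal.mem_sup_left (sub_mem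
          (Ideal.mul_mem_right _ _ (Ideal.subset_span ⟨i, rfl⟩))
          (Ideal.mul_mem_left _ _ (Ideal.subset_span ⟨j, rfl⟩)))
      · by_cases hl : l = v
        · subst hl
          exact Ideal.mem_sup_left (sub_mem
            (Ideal.mul_mem_left _ _ (Ideal.subset_span ⟨j, rfl⟩))
            (Ideal.mul_mem_right _ _ (Ideal.subset_span ⟨i, rfl⟩)))
        · exact Ideal.mem_sup_right
            (Ideal.subset_span ⟨i, j, k, l, hij, ⟨hadj, hk, hl⟩, rfl⟩)
    · apply sup_le le_sup_left
      rw [genBEI, Ideal.span_le]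
      rintro f ⟨i, j, k, l, hij, ⟨hadj, hk, hl⟩, rfl⟩
      exact Ideal.mem_sup_right
        (Ideal.subset_span ⟨i, j, k, l, hij, ⟨Or.inl hadj, hk, hl⟩, rfl⟩)
  · apply sup_le (le_sup_left.trans le_sup_right)
    rw [genBEI, Ideal.span_le]
    rintro f ⟨i, j, k, l, hij, ⟨hadj, hk, hl⟩, rfl⟩
    exact Ideal.mem_sup_left (Ideal.subset_span ⟨i, j, k, l, hij, hadj, rfl⟩)
end

section
/- Let G be a finite simple graph and v an internal vertex of G. Then ω(G_v) ≥ ω(G_v ∖ v) ≥ ω(G), where ω denotes the clique number. -/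
lemma clqNum_le_aux {V W : Type*} [Finite V] [Finite W] (G : SimpleGraph V) (H : SimpleGraph W)
    (h : ∀ s : Set V, G.IsClique s → ∃ t : Set W, H.IsClique t ∧ t.ncard = s.ncard) :
    clqNum G ≤ clqNum H := by
  have hbdd : BddAbove {k : ℕ | ∃ t : Set W, H.IsClique t ∧ t.ncard = k} := by
    refine ⟨Nat.card W, fun k hk => ?_⟩
    obtain ⟨t, _, ht⟩ := hk
    calc k = t.ncard := ht.symm
    _ ≤ (Set.univ : Set W).ncard := Set.ncard_le_ncard (Set.subset_univ t) Set.finite_univ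
    _ = Nat.card W := Set.ncard_univ W
  have hne : {k : ℕ | ∃ s : Set V, G.IsClique s ∧ s.ncard = k}.Nonempty :=
    ⟨0, ∅, by simp [SimpleGraph.IsClique]⟩
  refine csSup_le hne (fun k hk => ?_)
  obtain ⟨s, hs, hks⟩ := hk
  obtain ⟨t, htclq, htcard⟩ := h s hs
  exact le_csSup hbdd ⟨t, htclq, htcard.trans hks⟩

/-- if `v` is an internal vertex of `G`, then `ω(G_v) ≥ ω(G_v ∖ v) ≥ ω(G)`. -/
theorem stmt10 {V : Type*} [Finite V] (G : SimpleGraph V) (v : V)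
    (hv : InternalVtx G v) :
    clqNum G ≤ clqNum ((addNbrEdges G v).induce {u : V | u ≠ v}) ∧
    clqNum ((addNbrEdges G v).induce {u : V | u ≠ v}) ≤ clqNum (addNbrEdges G v) := by
  constructor
  · -- ω(G) ≤ ω(G_v ∖ v)
    refine clqNum_le_aux _ _ (fun s hs => ?_)
    -- first produce a clique s' of addNbrEdges G v with v ∉ s' and same ncard
    have key : ∃ s' : Set V, (addNbrEdges G v).IsClique s' ∧ v ∉ s' ∧ s'.ncard = s.ncard := by
      by_cases hvs : v ∈ s
      · -- find a neighbour of v not in s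
        have hw : ∃ w, G.Adj v w ∧ w ∉ s := by
          by_contra hcon
          push_neg at hcon
          obtain ⟨s1, t1, hs1, ht1, hst, hvs1, hvt1⟩ := hv
          have hsub : ∀ u ∈ s1, u ∈ s := by
            intro u hu
            by_cases huv : u = v
            · exact huv ▸ hvs
            · exact hcon u ((hs1.1 hvs1 hu (Ne.symm huv)))
          have hsub' : ∀ u ∈ t1, u ∈ s := by
            intro u hu
            by_cases huv : u = v
            · exact huv ▸ hvs
            · exact hcon u ((ht1.1 hvt1 hu (Ne.symm huv)))
          have e1 : s1 = s := hs1.2 s hs hsub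
          have e2 : t1 = s := ht1.2 s hs hsub'
          exact hst (e1.trans e2.symm)
        obtain ⟨w, hvw, hws⟩ := hw
        refine ⟨insert w (s \ {v}), ?_, ?_, ?_⟩
        · intro x hx y hy hxy
          rcases hx with rfl | ⟨hxs, hxv⟩
          · rcases hy with rfl | ⟨hys, hyv⟩
            · exact absurd rfl hxy
            · exact Or.inr ⟨hxy, hvw, hs hvs hys (Ne.symm hyv)⟩
          · rcases hy with rfl | ⟨hys, hyv⟩
            · exact Or.inr ⟨hxy, hs hvs hxs (Ne.symm hxv), hvw⟩
            · exact Or.inl (hs hxs hys hxy)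
        · intro hmem
          rcases hmem with rfl | ⟨_, hvv⟩
          · exact G.loopless.irrefl v hvw
          · exact hvv rfl
        · have hwn : w ∉ s \ {v} := fun h => hws h.1
          rw [Set.ncard_insert_of_notMem hwn (Set.toFinite _)]
          exact Set.ncard_diff_singleton_add_one hvs (Set.toFinite _)
      · refine ⟨s, ?_, hvs, rfl⟩
        intro x hx y hy hxy
        exact Or.inl (hs hx hy hxy)
    obtain ⟨s', hs', hvs', hcard⟩ := key
    refine ⟨Subtype.val ⁻¹' s', ?_, ?_⟩
    · intro x hx y hy hxy
      exact hs' hx hy (fun h => hxy (Subtype.ext h))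
    · rw [← hcard, ← Set.ncard_image_of_injective _ Subtype.val_injective,
        Subtype.image_preimage_coe]
      congr 1
      ext u
      simp only [Set.mem_inter_iff, Set.mem_setOf_eq]
      exact ⟨fun h => h.2, fun h => ⟨fun e => hvs' (e ▸ h), h⟩⟩
  · -- ω(G_v ∖ v) ≤ ω(G_v)
    refine clqNum_le_aux _ _ (fun t ht => ?_)
    refine ⟨Subtype.val '' t, ?_, Set.ncard_image_of_injective _ Subtype.val_injective⟩
    rintro x ⟨x', hx', rfl⟩ y ⟨y', hy', rfl⟩ hxy
    exact ht hx' hy' (fun h => hxy (congrArg Subtype.val h))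
end
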